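/- The sparsest permutation algorithm outputs exactly the Markov equivalence class of G* if and only if the pair (G*, P) satisfies the sparsest Markov representation (SMR) assumption: (G*, P) is Markov and every DAG G Markov with respect to P with G not Markov-equivalent to G* has strictly more edges than G*. -/

import Mathlib

open scoped Classical

/-- A directed acyclic graph on `Fin p`: a finite edge set together with a
topological ordering witnessing acyclicity. -/
structure DAG (p : ℕ) where
  edges : Finset (Fin p × Fin p)
  acyclic : ∃ σ : Equiv.Perm (Fin p), ∀ e ∈ edges, σ.symm e.1 < σ.symm e.2

namespace DAG

variable {p : ℕ}

def edgeRel (G : DAG p) (a b : Fin p) : Prop := (a, b) ∈ G.edges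

/-- adjacency in the skeleton -/
def adj (G : DAG p) (a b : Fin p) : Prop := (a, b) ∈ G.edges ∨ (b, a) ∈ G.edges

/-- the skeleton as a finite set of unordered pairs -/
def skeleton (G : DAG p) : Finset (Sym2 (Fin p)) := G.edges.image (fun e => s(e.1, e.2))

/-- `b` is a collider on a path segment `a - b - c`. -/
def isCollider (G : DAG p) (a b c : Fin p) : Prop := (a, b) ∈ G.edges ∧ (c, b) ∈ G.edges

/-- `b` is in `S` or an ancestor of some element of `S`. -/
def ancestorOfSet (G : DAG p) (b : Fin p) (S : Finset (Fin p)) : Prop :=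
  ∃ s ∈ S, Relation.ReflTransGen G.edgeRel b s

/-- a (simple, undirected) path from `i` to `j` in the skeleton, as a list of vertices -/
def IsTrail (G : DAG p) (i j : Fin p) (l : List (Fin p)) : Prop :=
  l.Chain' G.adj ∧ l.Nodup ∧ 2 ≤ l.length ∧ l.head? = some i ∧ l.getLast? = some j

/-- the path `l` d-connects its endpoints given `S`: every collider on it is in `S` or
has a descendant in `S`, and every non-collider on it is not in `S`. -/
def dConnectsPath (G : DAG p) (S : Finset (Fin p)) (l : List (Fin p)) : Prop :=
  ∀ a b c : Fin p, [a, b, c] <:+: l →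
    (G.isCollider a b c → G.ancestorOfSet b S) ∧ (¬ G.isCollider a b c → b ∉ S)

def dConnected (G : DAG p) (i j : Fin p) (S : Finset (Fin p)) : Prop :=
  ∃ l : List (Fin p), G.IsTrail i j l ∧ G.dConnectsPath S l

def dSep (G : DAG p) (i j : Fin p) (S : Finset (Fin p)) : Prop :=
  i ≠ j ∧ ¬ G.dConnected i j S

end DAG

namespace DAG
variable {p : ℕ} {G : DAG p}

lemma rtg_le (σ : Equiv.Perm (Fin p)) (hσ : ∀ e ∈ G.edges, σ.symm e.1 < σ.symm e.2)
    {a b : Fin p} (h : Relation.ReflTransGen G.edgeRel a b) :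
    σ.symm a ≤ σ.symm b := by
  induction h with
  | refl => exact le_refl _
  | tail h₁ h₂ ih => exact ih.trans (hσ _ h₂).le

lemma not_edge_self {a : Fin p} (h : (a, a) ∈ G.edges) : False := by
  obtain ⟨σ, hσ⟩ := G.acyclic
  exact lt_irrefl _ (hσ _ h)

lemma not_both_edges {a b : Fin p} (h : (a, b) ∈ G.edges) (h' : (b, a) ∈ G.edges) : False := by
  obtain ⟨σ, hσ⟩ := G.acyclic
  exact lt_irrefl _ ((hσ _ h).trans (hσ _ h'))

lemma adj_symm {a b : Fin p} (h : G.adj a b) : G.adj b a := h.symm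

lemma adj_ne {a b : Fin p} (h : G.adj a b) : a ≠ b := by
  rintro rfl
  exact h.elim not_edge_self not_edge_self

lemma isCollider_symm {a b c : Fin p} (h : G.isCollider a b c) : G.isCollider c b a :=
  ⟨h.2, h.1⟩

lemma dConnected_symm {i j : Fin p} {S : Finset (Fin p)} (h : G.dConnected i j S) :
    G.dConnected j i S := by
  obtain ⟨l, ⟨hc, hnd, hlen, hh, hl⟩, hconn⟩ := h
  refine ⟨l.reverse, ⟨?_, (List.nodup_reverse.mpr hnd), by simpa using hlen, by simpa using hl, by simpa using hh⟩, ?_⟩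
  · unfold List.Chain' at hc ⊢
    rw [List.isChain_reverse]
    exact hc.imp (fun {a b} h => adj_symm h)
  · intro a b c hinf
    have h2 : [c, b, a] <:+: l := by
      have : ([c, b, a]).reverse <:+: l.reverse := by simpa using hinf
      exact List.reverse_infix.mp this
    have := hconn c b a h2
    exact ⟨fun hcol => this.1 (isCollider_symm hcol), fun hncol => this.2 (fun hc' => hncol (isCollider_symm hc'))⟩

lemma dSep_symm {i j : Fin p} {S : Finset (Fin p)} (h : G.dSep i j S) : G.dSep j i S :=
  ⟨h.1.symm, fun hc => h.2 (dConnected_symm hc)⟩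

lemma adj_dConnected {i j : Fin p} (h : G.adj i j) (S : Finset (Fin p)) :
    G.dConnected i j S := by
  refine ⟨[i, j], ⟨?_, ?_, ?_, rfl, rfl⟩, ?_⟩
  · simp [List.Chain', List.isChain_cons_cons, h]
  · simp [adj_ne h]
  · simp
  · intro a b c hinf
    have := hinf.length_le
    simp at this

end DAG

namespace DAG
variable {p : ℕ} {G : DAG p}

lemma walk_aux (σ : Equiv.Perm (Fin p)) (hσ : ∀ e ∈ G.edges, σ.symm e.1 < σ.symm e.2)
    {i j : Fin p} (hij : σ.symm i < σ.symm j)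
    {l : List (Fin p)} (hc : l.Chain' G.adj) (hh : l.head? = some i)
    (hconn : G.dConnectsPath (Finset.univ.filter fun x => (x, j) ∈ G.edges) l) :
    ∀ (a : List (Fin p)) (x y : Fin p) (b : List (Fin p)), l = a ++ x :: y :: b →
      (y, x) ∈ G.edges → Relation.ReflTransGen G.edgeRel j y → False := by
  intro a
  induction a using List.reverseRecOn with
  | nil =>
    intro x y b hl hyx hjy
    have hxi : x = i := by rw [hl] at hh; simpa using hh
    have h1 : σ.symm j ≤ σ.symm y := rtg_le σ hσ hjy
    have h2 : σ.symm y < σ.symm i := by rw [← hxi]; exact hσ _ hyx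
    omega
  | append_singleton a' w ih =>
    intro x y b hl hyx hjy
    have hinf : [w, x, y] <:+: l := ⟨a', b, by rw [hl]; simp⟩
    have hc3 : ([w, x, y]).Chain' G.adj := hc.infix hinf
    have hadjwx : G.adj w x := (List.isChain_cons_cons.mp hc3).1
    by_cases hwx : (w, x) ∈ G.edges
    · obtain ⟨s, hs, hxs⟩ := (hconn w x y hinf).1 ⟨hwx, hyx⟩
      rw [Finset.mem_filter] at hs
      have h1 : σ.symm j ≤ σ.symm y := rtg_le σ hσ hjy
      have h2 : σ.symm y < σ.symm x := hσ _ hyx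
      have h3 : σ.symm x ≤ σ.symm s := rtg_le σ hσ hxs
      have h4 : σ.symm s < σ.symm j := hσ _ hs.2
      omega
    · have hxw : (x, w) ∈ G.edges := hadjwx.resolve_left hwx
      exact ih w x (y :: b) (by rw [hl]; simp) hxw (hjy.tail hyx)

lemma dSep_parents (σ : Equiv.Perm (Fin p)) (hσ : ∀ e ∈ G.edges, σ.symm e.1 < σ.symm e.2)
    {i j : Fin p} (hne : i ≠ j) (hnadj : ¬ G.adj i j) (hij : σ.symm i < σ.symm j) :
    G.dSep i j (Finset.univ.filter fun x => (x, j) ∈ G.edges) := by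
  refine ⟨hne, ?_⟩
  rintro ⟨l, ⟨hc, hnd, hlen, hh, hl⟩, hconn⟩
  have hne0 : l ≠ [] := by rintro rfl; simp at hlen
  have h1 : l.dropLast ++ [l.getLast hne0] = l := List.dropLast_append_getLast hne0
  have hj : l.getLast hne0 = j := by
    rw [List.getLast?_eq_getLast hne0] at hl
    exact Option.some.inj hl
  have hne1 : l.dropLast ≠ [] := by
    intro h
    have := congrArg List.length h1
    rw [h] at this
    simp at this
    omega
  have h2 : l.dropLast.dropLast ++ [l.dropLast.getLast hne1] = l.dropLast :=
    List.dropLast_append_getLast hne1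
  obtain ⟨a, x, hleq⟩ : ∃ a x, l = a ++ [x, j] := by
    refine ⟨l.dropLast.dropLast, l.dropLast.getLast hne1, ?_⟩
    conv_lhs => rw [← h1, ← h2]
    rw [hj]
    simp
  have hinfxj : [x, j] <:+: l := ⟨a, [], by rw [hleq]; simp⟩
  have hadjxj : G.adj x j := (List.isChain_cons_cons.mp (hc.infix hinfxj)).1
  by_cases hxj : (x, j) ∈ G.edges
  · rcases List.eq_nil_or_concat a with rfl | ⟨a', w, rfl⟩
    · have : x = i := by
        rw [hleq] at hh
        simpa using hh
      subst this
      exact hnadj hadjxj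
    · have hinf : [w, x, j] <:+: l := ⟨a', [], by rw [hleq]; simp⟩
      have hncol : ¬ G.isCollider w x j := fun hcol => not_both_edges hxj hcol.2
      have := (hconn w x j hinf).2 hncol
      exact this (Finset.mem_filter.mpr ⟨Finset.mem_univ _, hxj⟩)
  · have hjx : (j, x) ∈ G.edges := hadjxj.resolve_left hxj
    exact walk_aux σ hσ hij hc hh hconn a x j [] hleq hjx Relation.ReflTransGen.refl

lemma exists_dSep_of_not_adj {i j : Fin p} (hne : i ≠ j) (hnadj : ¬ G.adj i j) :
    ∃ S, G.dSep i j S := by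
  obtain ⟨σ, hσ⟩ := G.acyclic
  rcases lt_trichotomy (σ.symm i) (σ.symm j) with h | h | h
  · exact ⟨_, dSep_parents σ hσ hne hnadj h⟩
  · exact absurd (σ.symm.injective h) hne
  · exact ⟨_, dSep_symm (dSep_parents σ hσ hne.symm (fun h' => hnadj (adj_symm h')) h)⟩

lemma adj_iff_dSep {i j : Fin p} :
    G.adj i j ↔ i ≠ j ∧ ∀ S, ¬ G.dSep i j S := by
  constructor
  · intro h
    exact ⟨adj_ne h, fun S hd => hd.2 (adj_dConnected h S)⟩
  · rintro ⟨hne, hall⟩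
    by_contra hnadj
    obtain ⟨S, hS⟩ := exists_dSep_of_not_adj hne hnadj
    exact hall S hS

lemma mem_skeleton {a b : Fin p} : s(a, b) ∈ G.skeleton ↔ G.adj a b := by
  unfold skeleton
  rw [Finset.mem_image]
  constructor
  · rintro ⟨e, he, heq⟩
    rw [Sym2.eq_iff] at heq
    rcases heq with ⟨h1, h2⟩ | ⟨h1, h2⟩
    · left; rw [← h1, ← h2]; exact he
    · right; rw [← h1, ← h2]; exact he
  · rintro (h | h)
    · exact ⟨(a, b), h, rfl⟩
    · exact ⟨(b, a), h, Sym2.eq_swap⟩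

lemma card_skeleton : G.skeleton.card = G.edges.card := by
  unfold skeleton
  rw [Finset.card_image_of_injOn]
  intro e1 h1 e2 h2 heq
  rw [Sym2.eq_iff] at heq
  rcases heq with ⟨ha, hb⟩ | ⟨ha, hb⟩
  · exact Prod.ext ha hb
  · exfalso
    have h1' : (e1.1, e1.2) ∈ G.edges := h1
    have h2' : (e1.2, e1.1) ∈ G.edges := by rw [hb, ha]; exact h2
    exact not_both_edges h1' h2'

lemma card_eq_of_dSep_iff {G' : DAG p} (hd : ∀ i j S, G.dSep i j S ↔ G'.dSep i j S) :
    G.edges.card = G'.edges.card := by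
  rw [← card_skeleton, ← card_skeleton (G := G')]
  congr 1
  ext z
  induction z using Sym2.ind with
  | _ a b =>
    rw [mem_skeleton, mem_skeleton, adj_iff_dSep, adj_iff_dSep]
    simp only [hd]

lemma ext_edges {G' : DAG p} (h : G.edges = G'.edges) : G = G' := by
  cases G; cases G'; simpa using h

end DAG



/-- A (pairwise) conditional independence model: `CI i j S` means
`X_i ⫫ X_j | X_S`. -/
abbrev CIModel (p : ℕ) := Fin p → Fin p → Finset (Fin p) → Prop

variable {p : ℕ}

/-- `G` is Markov w.r.t. the CI model: every d-separation is a CI statement. -/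
def Markov (G : DAG p) (CI : CIModel p) : Prop :=
  ∀ i j S, G.dSep i j S → CI i j S

/-- Markov equivalence: same d-separation statements. -/
def MarkovEquiv (G G' : DAG p) : Prop :=
  ∀ i j S, G.dSep i j S ↔ G'.dSep i j S

/-- `π` is a topological ordering of `G`. -/
def IsTopOrder (G : DAG p) (π : Equiv.Perm (Fin p)) : Prop :=
  ∀ e ∈ G.edges, π.symm e.1 < π.symm e.2

/-- the predecessors `{π 0, …, π (k-1)}` of position `k` in the ordering `π` -/
def predSet (π : Equiv.Perm (Fin p)) (k : Fin p) : Finset (Fin p) :=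
  (Finset.univ.filter (fun m => m < k)).image π

/-- The minimal I-map `G_π`: for `j < k` there is an edge `π j → π k` iff
`π j` and `π k` are conditionally dependent given all other predecessors of `π k`. -/
noncomputable def minimalIMap (CI : CIModel p) (π : Equiv.Perm (Fin p)) : DAG p where
  edges := Finset.univ.filter (fun q : Fin p × Fin p =>
    ∃ j k : Fin p, j < k ∧ q = (π j, π k) ∧ ¬ CI (π j) (π k) ((predSet π k).erase (π j)))
  acyclic := ⟨π, by
    intro e he
    rw [Finset.mem_filter] at he
    obtain ⟨-, j, k, hjk, rfl, -⟩ := he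
    simpa using hjk⟩

/-- the minimal number of edges of a minimal I-map `G_π` over all permutations `π` -/
noncomputable def spScore (CI : CIModel p) : ℕ :=
  ((Finset.univ : Finset (Equiv.Perm (Fin p))).image
    (fun π => (minimalIMap CI π).edges.card)).min' (Finset.univ_nonempty.image _)

/-- adjacency-faithfulness: endpoints of edges of `G` are conditionally dependent
given any conditioning set. -/
def AdjFaithful (G : DAG p) (CI : CIModel p) : Prop :=
  ∀ e ∈ G.edges, ∀ S : Finset (Fin p), e.1 ∉ S → e.2 ∉ S →
    ¬ CI e.1 e.2 S ∧ ¬ CI e.2 e.1 S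

/-- the sparsest Markov representation assumption -/
def SMR (G : DAG p) (CI : CIModel p) : Prop :=
  Markov G CI ∧
    ∀ G' : DAG p, Markov G' CI → ¬ MarkovEquiv G' G → G.edges.card < G'.edges.card

/-- the set of d-separation statements of `G` -/
def DsepSet (G : DAG p) : Set (Fin p × Fin p × Finset (Fin p)) :=
  {t | G.dSep t.1 t.2.1 t.2.2}

/-- P-minimality: no Markov DAG entails strictly more d-separations. -/
def PMinimal (G : DAG p) (CI : CIModel p) : Prop :=
  ∀ G' : DAG p, Markov G' CI → ¬ (DsepSet G ⊂ DsepSet G')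


/-- the set of DAGs output by the SP algorithm: all minimal I-maps `G_π` attaining
the minimal edge count over all permutations -/
noncomputable def SPOutputs (CI : CIModel p) : Set (DAG p) :=
  {G | ∃ π : Equiv.Perm (Fin p), minimalIMap CI π = G ∧
        (minimalIMap CI π).edges.card = spScore CI}


-- ===== combinatorial auxiliary lemmas =====

lemma markov_of_equiv {G G' : DAG p} (h : MarkovEquiv G G') {CI : CIModel p}
    (hM : Markov G' CI) : Markov G CI :=
  fun i j S hd => hM i j S ((h i j S).mp hd)

lemma exists_minimal_markov (CI : CIModel p) :
    ∀ n (G : DAG p), G.edges.card ≤ n → Markov G CI →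
      ∃ H : DAG p, Markov H CI ∧ (∀ G' : DAG p, G'.edges ⊂ H.edges → ¬ Markov G' CI) ∧
        H.edges ⊆ G.edges := by
  intro n
  induction n with
  | zero =>
    intro G hcard hM
    refine ⟨G, hM, ?_, subset_rfl⟩
    intro G' hsub
    have := Finset.card_lt_card hsub
    omega
  | succ n ih =>
    intro G hcard hM
    by_cases h : ∃ G' : DAG p, G'.edges ⊂ G.edges ∧ Markov G' CI
    · obtain ⟨G', hsub, hM'⟩ := h
      have hle : G'.edges.card ≤ n := by
        have := Finset.card_lt_card hsub
        omega
      obtain ⟨H, h1, h2, h3⟩ := ih G' hle hM'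
      exact ⟨H, h1, h2, h3.trans hsub.subset⟩
    · push_neg at h
      exact ⟨G, hM, fun G' hsub hM' => h G' hsub hM', subset_rfl⟩

lemma spScore_exists (CI : CIModel p) :
    ∃ π : Equiv.Perm (Fin p), (minimalIMap CI π).edges.card = spScore CI := by
  have h := Finset.min'_mem ((Finset.univ : Finset (Equiv.Perm (Fin p))).image
    (fun π => (minimalIMap CI π).edges.card)) (Finset.univ_nonempty.image _)
  rw [Finset.mem_image] at h
  obtain ⟨π, -, hπ⟩ := h
  exact ⟨π, hπ⟩

lemma spScore_le (CI : CIModel p) (π : Equiv.Perm (Fin p)) :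
    spScore CI ≤ (minimalIMap CI π).edges.card :=
  Finset.min'_le _ _ (Finset.mem_image_of_mem _ (Finset.mem_univ π))


/-- The SP algorithm outputs exactly the Markov equivalence class of `G*` if and
only if `(G*, P)` satisfies the sparsest Markov representation assumption.
(The hypotheses record the facts that every `G_π` is Markov and minimal,
and that every minimal Markov DAG arises as some `G_π`.) -/
theorem sp_success_iff_SMR (CI : CIModel p) (Gstar : DAG p)
    (hMarkovPi : ∀ π : Equiv.Perm (Fin p), Markov (minimalIMap CI π) CI)
    (hMinPi : ∀ (π : Equiv.Perm (Fin p)) (G' : DAG p),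
      G'.edges ⊂ (minimalIMap CI π).edges → ¬ Markov G' CI)
    (hArise : ∀ G : DAG p, Markov G CI →
      (∀ G' : DAG p, G'.edges ⊂ G.edges → ¬ Markov G' CI) →
      ∃ π : Equiv.Perm (Fin p), minimalIMap CI π = G) :
    SPOutputs CI = {G : DAG p | MarkovEquiv G Gstar} ↔ SMR Gstar CI := by
  have hCardEq : ∀ {G G' : DAG p}, MarkovEquiv G G' → G.edges.card = G'.edges.card :=
    fun h => DAG.card_eq_of_dSep_iff h
  obtain ⟨π0, hπ0⟩ := spScore_exists CI
  have hle : ∀ π, spScore CI ≤ (minimalIMap CI π).edges.card := spScore_le CI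
  constructor
  · intro hSP
    have hGstar_mem : Gstar ∈ SPOutputs CI := by
      rw [hSP]
      exact fun i j S => Iff.rfl
    obtain ⟨πs, hπs, hcs⟩ := hGstar_mem
    have hMstar : Markov Gstar CI := by rw [← hπs]; exact hMarkovPi πs
    have hcardstar : Gstar.edges.card = spScore CI := by rw [← hπs]; exact hcs
    refine ⟨hMstar, ?_⟩
    intro G' hM' hneq
    obtain ⟨H, hHM, hHmin, hHsub⟩ := exists_minimal_markov CI G'.edges.card G' le_rfl hM'
    obtain ⟨ρ, hρ⟩ := hArise H hHM hHmin
    by_cases heq : MarkovEquiv H Gstar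
    · have hHcard : H.edges.card = Gstar.edges.card := hCardEq heq
      rcases lt_or_eq_of_le (Finset.card_le_card hHsub) with hlt | heqc
      · omega
      · have hHeq : H = G' := DAG.ext_edges (Finset.eq_of_subset_of_card_le hHsub heqc.ge)
        exact absurd (hHeq ▸ heq) hneq
    · have h1 : spScore CI ≤ H.edges.card := by rw [← hρ]; exact hle ρ
      have h2 : spScore CI ≠ H.edges.card := by
        intro h
        have hmem : H ∈ SPOutputs CI := ⟨ρ, hρ, by rw [hρ]; exact h.symm⟩
        rw [hSP] at hmem
        exact heq hmem
      have h3 : H.edges.card ≤ G'.edges.card := Finset.card_le_card hHsub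
      omega
  · rintro ⟨hMstar, hSMR⟩
    obtain ⟨H0, hH0M, hH0min, hH0sub⟩ := exists_minimal_markov CI Gstar.edges.card Gstar le_rfl hMstar
    have hH0equiv : MarkovEquiv H0 Gstar := by
      by_contra h
      have h1 := hSMR H0 hH0M h
      have h2 := Finset.card_le_card hH0sub
      omega
    obtain ⟨ρ0, hρ0⟩ := hArise H0 hH0M hH0min
    have hscore_le : spScore CI ≤ Gstar.edges.card := by
      have h1 := hle ρ0
      rw [hρ0] at h1
      have h2 := hCardEq hH0equiv
      omega
    have hπ0equiv : MarkovEquiv (minimalIMap CI π0) Gstar := by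
      by_contra h
      have := hSMR _ (hMarkovPi π0) h
      omega
    have hscore_eq : spScore CI = Gstar.edges.card := by
      have := hCardEq hπ0equiv
      omega
    ext G
    simp only [SPOutputs, Set.mem_setOf_eq]
    constructor
    · rintro ⟨π, rfl, hcard⟩
      by_contra h
      have := hSMR _ (hMarkovPi π) h
      omega
    · intro hGeq
      have hGM : Markov G CI := markov_of_equiv hGeq hMstar
      have hGcard : G.edges.card = Gstar.edges.card := hCardEq hGeq
      have hGmin : ∀ G' : DAG p, G'.edges ⊂ G.edges → ¬ Markov G' CI := by
        intro G'' hsub hM''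
        obtain ⟨H, hHM, hHmin, hHsub⟩ := exists_minimal_markov CI G''.edges.card G'' le_rfl hM''
        have hHlt : H.edges.card < G.edges.card :=
          lt_of_le_of_lt (Finset.card_le_card hHsub) (Finset.card_lt_card hsub)
        by_cases heq : MarkovEquiv H Gstar
        · have := hCardEq heq
          omega
        · have := hSMR H hHM heq
          omega
      obtain ⟨π, hπ⟩ := hArise G hGM hGmin
      exact ⟨π, hπ, by rw [hπ]; omega⟩
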